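/- Let C ⊆ ℍ be a geometric circle, i.e. C = {p + cos(s)·v + sin(s)·w : s ∈ ℝ} for some p, v, w ∈ ℍ with ‖v‖ = ‖w‖ ≠ 0 and ⟨v,w⟩ = 0. Suppose C is contained in the unit sphere {x ∈ ℍ : ‖x‖ = 1} and 1 ∈ C. Then there exist purely imaginary quaternions α, β with ‖α‖ = ‖β‖ such that C = {exp(tα)·exp(-tβ) : t ∈ ℝ}. -/

import Mathlib

open Quaternion RealInnerProductSpace

lemma aux_inner_comp (a b : ℍ[ℝ]) :
    ⟪a, b⟫ = a.re * b.re + a.imI * b.imI + a.imJ * b.imJ + a.imK * b.imK := by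
  simp [Quaternion.inner_def, Quaternion.re_mul]

lemma aux_re_mul (a b : ℍ[ℝ]) (ha : a.re = 0) : (a * b).re = -⟪a, b⟫ := by
  simp [aux_inner_comp, Quaternion.re_mul, ha]
  ring

lemma aux_sq_im (a : ℍ[ℝ]) (ha : a.re = 0) :
    a * a = -((Quaternion.normSq a : ℝ) : ℍ[ℝ]) := by
  have h : star a = -a := Quaternion.star_eq_neg.2 ha
  calc a * a = -(star a * a) := by rw [h, neg_mul, neg_neg]
  _ = -((Quaternion.normSq a : ℝ) : ℍ[ℝ]) := by rw [Quaternion.star_mul_self]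

lemma aux_anticomm (a b : ℍ[ℝ]) (ha : a.re = 0) (hb : b.re = 0)
    (hab : ⟪a, b⟫ = 0) : a * b = -(b * a) := by
  rw [aux_inner_comp] at hab
  ext <;> simp [Quaternion.re_mul, Quaternion.imI_mul, Quaternion.imJ_mul,
    Quaternion.imK_mul, ha, hb]
  · simp [ha] at hab; linarith
  all_goals ring

lemma aux_exp (n : ℍ[ℝ]) (h0 : n.re = 0) (h1 : ‖n‖ = 1) (c : ℝ) :
    NormedSpace.exp (c • n) = ((Real.cos c : ℝ) : ℍ[ℝ]) + Real.sin c • n := by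
  rcases eq_or_ne c 0 with rfl | hc
  · simp
  · rw [Quaternion.exp_of_re_eq_zero _ (by simp [h0])]
    have hn : ‖c • n‖ = |c| := by simp [norm_smul, h1]
    rw [hn, smul_smul]
    rcases abs_cases c with ⟨h, _⟩ | ⟨h, _⟩
    · rw [h]
      congr 1
      rw [div_mul_cancel₀ _ hc]
    · rw [h, Real.cos_neg, Real.sin_neg]
      congr 1
      field_simp

set_option maxHeartbeats 1000000 in
/-- Every geometric circle in `ℍ` contained in the unit sphere `SU(2)` and passing through
the identity `1` can be parameterized as `t ↦ exp(tα)·exp(-tβ)` for purely imaginary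
quaternions `α, β` of equal length (the 1:1 resonance condition). -/
theorem circle_on_sphere_is_exp_curve (p v w : ℍ[ℝ])
    (hvw : ‖v‖ = ‖w‖) (hv0 : v ≠ 0) (hortho : ⟪v, w⟫ = 0)
    (C : Set ℍ[ℝ])
    (hC : C = {x : ℍ[ℝ] | ∃ s : ℝ, x = p + Real.cos s • v + Real.sin s • w})
    (hsphere : C ⊆ {x : ℍ[ℝ] | ‖x‖ = 1}) (hone : (1 : ℍ[ℝ]) ∈ C) :
    ∃ α β : ℍ[ℝ], α.re = 0 ∧ β.re = 0 ∧ ‖α‖ = ‖β‖ ∧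
      C = {x : ℍ[ℝ] | ∃ t : ℝ,
        x = NormedSpace.exp (t • α) * NormedSpace.exp (-(t • β))} := by
  subst hC
  obtain ⟨s₀, hs₀⟩ := hone
  have hx : ∀ s : ℝ, ‖p + Real.cos s • v + Real.sin s • w‖ = 1 := fun s => hsphere ⟨s, rfl⟩
  have hwv : ⟪w, v⟫ = 0 := by rw [real_inner_comm]; exact hortho
  have hvv : ⟪v, v⟫ = ‖v‖ ^ 2 := real_inner_self_eq_norm_sq v
  have hww : ⟪w, w⟫ = ‖v‖ ^ 2 := by rw [real_inner_self_eq_norm_sq, hvw]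
  have h0 : ‖p + v‖ = 1 := by simpa using hx 0
  have hπ : ‖p - v‖ = 1 := by
    simpa [Real.cos_pi, Real.sin_pi, sub_eq_add_neg] using hx Real.pi
  have hh : ‖p + w‖ = 1 := by
    simpa [Real.cos_pi_div_two, Real.sin_pi_div_two] using hx (Real.pi / 2)
  have hh' : ‖p - w‖ = 1 := by
    simpa [Real.cos_neg, Real.sin_neg, Real.cos_pi_div_two, Real.sin_pi_div_two,
      sub_eq_add_neg] using hx (-(Real.pi / 2))
  have hpv : ⟪p, v⟫ = 0 := by
    have e1 := norm_add_sq_real p v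
    have e2 := norm_sub_sq_real p v
    rw [h0] at e1; rw [hπ] at e2; linarith
  have hpw : ⟪p, w⟫ = 0 := by
    have e1 := norm_add_sq_real p w
    have e2 := norm_sub_sq_real p w
    rw [hh] at e1; rw [hh'] at e2; linarith
  obtain ⟨v', hv'def⟩ : ∃ y : ℍ[ℝ], y = Real.cos s₀ • v + Real.sin s₀ • w := ⟨_, rfl⟩
  obtain ⟨w', hw'def⟩ : ∃ y : ℍ[ℝ], y = -Real.sin s₀ • v + Real.cos s₀ • w := ⟨_, rfl⟩
  obtain ⟨R, hRdef⟩ : ∃ r : ℝ, r = ‖v‖ ^ 2 := ⟨_, rfl⟩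
  have hR : 0 < R := by
    have h : ‖v‖ ≠ 0 := norm_ne_zero_iff.2 hv0
    rw [hRdef]; positivity
  have hpv' : ⟪p, v'⟫ = 0 := by
    simp [hv'def, inner_add_right, real_inner_smul_right, hpv, hpw]
  have hpw' : ⟪p, w'⟫ = 0 := by
    simp [hw'def, inner_add_right, real_inner_smul_right, hpv, hpw]
  have hv'w' : ⟪v', w'⟫ = 0 := by
    simp only [hv'def, hw'def, inner_add_left, inner_add_right, real_inner_smul_left,
      real_inner_smul_right, hortho, hwv, hvv, hww]
    ring
  have hnv' : ⟪v', v'⟫ = R := by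
    simp only [hv'def, inner_add_left, inner_add_right, real_inner_smul_left,
      real_inner_smul_right, hortho, hwv, hvv, hww, hRdef]
    nlinarith [Real.sin_sq_add_cos_sq s₀]
  have hnw' : ⟪w', w'⟫ = R := by
    simp only [hw'def, inner_add_left, inner_add_right, real_inner_smul_left,
      real_inner_smul_right, hortho, hwv, hvv, hww, hRdef]
    nlinarith [Real.sin_sq_add_cos_sq s₀]
  have hnormv' : ‖v'‖ ^ 2 = R := by rw [← real_inner_self_eq_norm_sq]; exact hnv'
  have hnormw' : ‖w'‖ ^ 2 = R := by rw [← real_inner_self_eq_norm_sq]; exact hnw'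
  have hnsv' : Quaternion.normSq v' = R := by
    rw [Quaternion.normSq_eq_norm_mul_self, ← sq]; exact hnormv'
  have hnsw' : Quaternion.normSq w' = R := by
    rw [Quaternion.normSq_eq_norm_mul_self, ← sq]; exact hnormw'
  have h1C : p + v' = 1 := by rw [hv'def, ← add_assoc]; exact hs₀.symm
  have hp : p = 1 - v' := by rw [← h1C]; abel
  have hone_inner : ∀ b : ℍ[ℝ], ⟪(1 : ℍ[ℝ]), b⟫ = b.re := by
    intro b; simp [aux_inner_comp]
  have hre_v' : v'.re = R := by
    rw [← hone_inner, ← h1C, inner_add_left, hpv']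
    simpa using hnv'
  have hre_w' : w'.re = 0 := by
    rw [← hone_inner, ← h1C, inner_add_left, hpw', hv'w']; ring
  obtain ⟨z, hzdef⟩ : ∃ y : ℍ[ℝ], y = v' - ((R : ℝ) : ℍ[ℝ]) := ⟨_, rfl⟩
  have hz_re : z.re = 0 := by
    simp [hzdef, Quaternion.re_sub, hre_v']
  have hw'z : ⟪w', z⟫ = 0 := by
    have hco : ⟪w', ((R : ℝ) : ℍ[ℝ])⟫ = 0 := by
      simp [aux_inner_comp, hre_w']
    rw [hzdef, inner_sub_right, hco, real_inner_comm, hv'w', sub_zero]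
  have hnsz : Quaternion.normSq z = R - R ^ 2 := by
    have h1 : Quaternion.normSq z = Quaternion.normSq v' - v'.re ^ 2 := by
      simp only [hzdef, Quaternion.normSq_def', Quaternion.re_sub, Quaternion.imI_sub,
        Quaternion.imJ_sub, Quaternion.imK_sub, Quaternion.re_coe, Quaternion.imI_coe,
        Quaternion.imJ_coe, Quaternion.imK_coe, hre_v']
      ring
    rw [h1, hnsv', hre_v']
  obtain ⟨u, hudef⟩ : ∃ y : ℍ[ℝ], y = -R⁻¹ • (w' * z) := ⟨_, rfl⟩
  have hu_re : u.re = 0 := by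
    simp [hudef, Quaternion.re_smul, aux_re_mul _ _ hre_w', hw'z]
  have hww' : w' * w' = -((R : ℝ) : ℍ[ℝ]) := by
    rw [aux_sq_im _ hre_w', hnsw']
  have hzw' : z * w' = -(w' * z) :=
    aux_anticomm z w' hz_re hre_w' (by rw [real_inner_comm]; exact hw'z)
  have hw'u : w' * u = z := by
    rw [hudef, mul_smul_comm, ← mul_assoc, hww', neg_mul, Quaternion.coe_mul_eq_smul,
      smul_neg, smul_smul, neg_mul, neg_smul, neg_neg, inv_mul_cancel₀ (ne_of_gt hR), one_smul]
  have huw' : u * w' = -z := by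
    rw [hudef, smul_mul_assoc, mul_assoc, hzw', mul_neg, ← mul_assoc, hww', neg_mul,
      Quaternion.coe_mul_eq_smul, neg_neg, smul_smul, neg_mul,
      inv_mul_cancel₀ (ne_of_gt hR), neg_smul, one_smul]
  have hnsu : Quaternion.normSq u = 1 - R := by
    rw [hudef, Quaternion.normSq_smul, map_mul, hnsw', hnsz]
    field_simp
  have huu : u * u = -(((1 - R : ℝ)) : ℍ[ℝ]) := by
    rw [aux_sq_im _ hu_re, hnsu]
  have hinner_w'u : ⟪w', u⟫ = 0 := by
    have h1 := aux_re_mul w' u hre_w'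
    rw [hw'u, hz_re] at h1
    linarith
  obtain ⟨n, hndef⟩ : ∃ y : ℍ[ℝ], y = w' + u := ⟨_, rfl⟩
  obtain ⟨m, hmdef⟩ : ∃ y : ℍ[ℝ], y = u - w' := ⟨_, rfl⟩
  have hn_re : n.re = 0 := by simp [hndef, Quaternion.re_add, hre_w', hu_re]
  have hm_re : m.re = 0 := by simp [hmdef, Quaternion.re_sub, hre_w', hu_re]
  have hu_norm : ‖u‖ ^ 2 = 1 - R := by
    rw [sq, ← Quaternion.normSq_eq_norm_mul_self, hnsu]
  have hnorm_n : ‖n‖ = 1 := by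
    have e1 := norm_add_sq_real w' u
    rw [hinner_w'u, hnormw', hu_norm] at e1
    have e3 : ‖n‖ ^ 2 = 1 := by rw [hndef, e1]; ring
    nlinarith [norm_nonneg n]
  have hnorm_m : ‖m‖ = 1 := by
    have e1 := norm_sub_sq_real u w'
    rw [real_inner_comm, hinner_w'u, hnormw', hu_norm] at e1
    have e3 : ‖m‖ ^ 2 = 1 := by rw [hmdef, e1]; ring
    nlinarith [norm_nonneg m]
  have hnm : n * m = (2 : ℝ) • v' - 1 := by
    have expand : n * m = w' * u - w' * w' + (u * u - u * w') := by
      rw [hndef, hmdef]; noncomm_ring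
    rw [expand, hw'u, hww', huu, huw', hzdef]
    push_cast
    module
  have hnmm : n - m = (2 : ℝ) • w' := by rw [hndef, hmdef]; module
  refine ⟨(2⁻¹ : ℝ) • n, (2⁻¹ : ℝ) • m, by simp [Quaternion.re_smul, hn_re],
    by simp [Quaternion.re_smul, hm_re], by simp [norm_smul, hnorm_n, hnorm_m], ?_⟩
  have coe_one_smul : ∀ r : ℝ, ((r : ℝ) : ℍ[ℝ]) = r • (1 : ℍ[ℝ]) := fun r => by
    rw [← Quaternion.coe_mul_eq_smul, mul_one]
  have key : ∀ t : ℝ, NormedSpace.exp (t • ((2⁻¹ : ℝ) • n)) *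
      NormedSpace.exp (-(t • ((2⁻¹ : ℝ) • m))) =
      p + Real.cos t • v' + Real.sin t • w' := by
    intro t
    have e1 : t • ((2⁻¹ : ℝ) • n) = (t * 2⁻¹) • n := by rw [smul_smul]
    have e2 : -(t • ((2⁻¹ : ℝ) • m)) = (-(t * 2⁻¹)) • m := by rw [smul_smul, neg_smul]
    rw [e1, e2, aux_exp n hn_re hnorm_n, aux_exp m hm_re hnorm_m,
      Real.cos_neg, Real.sin_neg, neg_smul, ← sub_eq_add_neg]
    have hprod : (((Real.cos (t * 2⁻¹) : ℝ) : ℍ[ℝ]) + Real.sin (t * 2⁻¹) • n) *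
        (((Real.cos (t * 2⁻¹) : ℝ) : ℍ[ℝ]) - Real.sin (t * 2⁻¹) • m) =
        (Real.cos (t * 2⁻¹) * Real.cos (t * 2⁻¹)) • (1 : ℍ[ℝ]) +
          (Real.cos (t * 2⁻¹) * Real.sin (t * 2⁻¹)) • (n - m) -
          (Real.sin (t * 2⁻¹) * Real.sin (t * 2⁻¹)) • (n * m) := by
      simp only [coe_one_smul, add_mul, mul_add, mul_sub, sub_mul, smul_mul_assoc,
        mul_smul_comm, smul_smul, one_mul, mul_one, smul_sub, smul_add]
      module
    rw [hprod, hnmm, hnm, hp]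
    have ht : 2 * (t * 2⁻¹) = t := by ring
    have hc2 : Real.cos t = 1 - 2 * Real.sin (t * 2⁻¹) ^ 2 := by
      have h := Real.cos_two_mul (t * 2⁻¹)
      rw [ht] at h
      linear_combination h + 2 * Real.sin_sq_add_cos_sq (t * 2⁻¹)
    have hs2 : Real.sin t = 2 * Real.sin (t * 2⁻¹) * Real.cos (t * 2⁻¹) := by
      have h := Real.sin_two_mul (t * 2⁻¹)
      rw [ht] at h
      linear_combination h
    rw [hc2, hs2]
    have hpyth : Real.sin (t * 2⁻¹) ^ 2 + Real.cos (t * 2⁻¹) ^ 2 = 1 :=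
      Real.sin_sq_add_cos_sq _
    match_scalars <;> ring_nf
    all_goals linarith [Real.sin_sq_add_cos_sq (t * (1 / 2)), Real.sin_sq_add_cos_sq (t * 2⁻¹)]
  have shift : ∀ τ : ℝ, p + Real.cos τ • v' + Real.sin τ • w' =
      p + Real.cos (τ + s₀) • v + Real.sin (τ + s₀) • w := by
    intro τ
    rw [hv'def, hw'def, Real.cos_add, Real.sin_add]
    module
  ext x
  simp only [Set.mem_setOf_eq]
  constructor
  · rintro ⟨s, rfl⟩
    refine ⟨s - s₀, ?_⟩
    rw [key, shift, sub_add_cancel]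
  · rintro ⟨t, rfl⟩
    exact ⟨t + s₀, by rw [key, shift]⟩
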